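/- arXiv:1108.5563 — 3 statements merged into one kernel-verified Lean document; each statement's English description precedes it below -/
import Mathlib

section
/- Let K be ℝ or ℂ and let g be a Lie algebra over K with g^{(N+1)} = {0} for some integer N ≥ 1. Then for every q ≥ 1 and any elements x_1, …, x_q ∈ g, the Lie subalgebra of g generated by {x_1, …, x_q} is finite-dimensional, with dimension at most ∑_{r=0}^{N-1} q^{r+1}. -/
open LieModule Submodule

section Aux

variable {K : Type} [RCLike K] {g : Type} [LieRing g] [LieAlgebra K g]
variable {q : ℕ}

/-- Left-normed bracketing: `lnb x y [i₁,…,iₖ] = ⁅…⁅y, x i₁⁆, …, x iₖ⁆`. -/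
private def lnb (x : Fin q → g) (y : g) (L : List (Fin q)) : g :=
  L.foldl (fun a i => ⁅a, x i⁆) y

variable (x : Fin q → g)

private lemma lnb_nil (y : g) : lnb x y [] = y := rfl

private lemma lnb_concat (y : g) (L : List (Fin q)) (k : Fin q) :
    lnb x y (L ++ [k]) = ⁅lnb x y L, x k⁆ := by
  simp [lnb]

/-- The set of left-normed brackets of the generators. -/
private def Bset : Set g := {z | ∃ i L, z = lnb x (x i) L}

variable (K) in
private def Vmod : Submodule K g := Submodule.span K (Bset x)

private lemma lnb_mem_V (i : Fin q) (L : List (Fin q)) : lnb x (x i) L ∈ Vmod K x :=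
  Submodule.subset_span ⟨i, L, rfl⟩

private lemma bracket_x_mem (k : Fin q) : ∀ v ∈ Vmod K x, ⁅v, x k⁆ ∈ Vmod K x := by
  intro v hv
  induction hv using Submodule.span_induction with
  | mem z hz =>
      obtain ⟨i, L, rfl⟩ := hz
      rw [← lnb_concat]; exact lnb_mem_V x i _
  | zero => rw [zero_lie]; exact (Vmod K x).zero_mem
  | add a b _ _ ha hb => rw [add_lie]; exact (Vmod K x).add_mem ha hb
  | smul c a _ ha => rw [smul_lie]; exact (Vmod K x).smul_mem c ha

private lemma core (M : List (Fin q)) :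
    ∀ (L : List (Fin q)) (i j : Fin q),
      ⁅lnb x (x i) L, lnb x (x j) M⁆ ∈ Vmod K x := by
  induction M using List.reverseRecOn with
  | nil =>
      intro L i j
      rw [lnb_nil, ← lnb_concat]; exact lnb_mem_V x i _
  | append_singleton M' k ih =>
      intro L i j
      rw [lnb_concat, leibniz_lie]
      refine (Vmod K x).add_mem ?_ ?_
      · exact bracket_x_mem x k _ (ih L i j)
      · rw [← lie_skew, ← lnb_concat]
        exact (Vmod K x).neg_mem (ih (L ++ [k]) i j)

private lemma V_lie_mem : ∀ u ∈ Vmod K x, ∀ v ∈ Vmod K x, ⁅u, v⁆ ∈ Vmod K x := by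
  intro u hu
  induction hu using Submodule.span_induction with
  | mem z hz =>
      obtain ⟨i, L, rfl⟩ := hz
      intro v hv
      induction hv using Submodule.span_induction with
      | mem w hw =>
          obtain ⟨j, M, rfl⟩ := hw
          exact core x M L i j
      | zero => rw [lie_zero]; exact (Vmod K x).zero_mem
      | add a b _ _ ha hb => rw [lie_add]; exact (Vmod K x).add_mem ha hb
      | smul c a _ ha => rw [lie_smul]; exact (Vmod K x).smul_mem c ha
  | zero => intro v hv; rw [zero_lie]; exact (Vmod K x).zero_mem
  | add a b _ _ ha hb =>
      intro v hv; rw [add_lie]; exact (Vmod K x).add_mem (ha v hv) (hb v hv)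
  | smul c a _ ha =>
      intro v hv; rw [smul_lie]; exact (Vmod K x).smul_mem c (ha v hv)

variable (K) in
private def Salg : LieSubalgebra K g :=
  { Vmod K x with lie_mem' := fun hu hv => V_lie_mem x _ hu _ hv }

private lemma lnb_mem_lcs (i : Fin q) (L : List (Fin q)) :
    lnb x (x i) L ∈ LieModule.lowerCentralSeries K g g L.length := by
  induction L using List.reverseRecOn with
  | nil => exact LieSubmodule.mem_top _
  | append_singleton L' k ih =>
      rw [lnb_concat]
      have h : (L' ++ [k]).length = L'.length + 1 := by simp
      rw [h, LieModule.lowerCentralSeries_succ]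
      rw [← lie_skew]
      exact neg_mem (LieSubmodule.lie_mem_lie (LieSubmodule.mem_top _) ih)

private lemma toSubmodule_lieSpan_eq :
    (LieSubalgebra.lieSpan K g (Set.range x)).toSubmodule = Vmod K x := by
  apply le_antisymm
  · have h : LieSubalgebra.lieSpan K g (Set.range x) ≤ Salg K x := by
      rw [LieSubalgebra.lieSpan_le]
      rintro _ ⟨i, rfl⟩
      exact lnb_mem_V x i []
    exact h
  · rw [Vmod, Submodule.span_le]
    rintro _ ⟨i, L, rfl⟩
    induction L using List.reverseRecOn with
    | nil => exact LieSubalgebra.subset_lieSpan ⟨i, rfl⟩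
    | append_singleton L' k ih =>
        rw [lnb_concat]
        exact LieSubalgebra.lie_mem _ ih (LieSubalgebra.subset_lieSpan ⟨k, rfl⟩)

end Aux

/-- In an `(N+1)`-step nilpotent Lie algebra `g` over `K ∈ {ℝ, ℂ}`, the Lie subalgebra
generated by any `q ≥ 1` elements `x_1, …, x_q` is finite dimensional, of dimension at most
`∑_{r=0}^{N-1} q^(r+1)`.  The hypothesis `g^{(N+1)} = 0` is expressed as
`LieModule.lowerCentralSeries K g g N = ⊥` (Mathlib's series starts at index `0` with
`g^{(1)} = g`). -/
theorem finiteDimensional_lieSpan_of_nilpotent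
    (K : Type) [RCLike K] (g : Type) [LieRing g] [LieAlgebra K g]
    (N : ℕ) (hN : 1 ≤ N) (hnil : LieModule.lowerCentralSeries K g g N = ⊥)
    (q : ℕ) (hq : 1 ≤ q) (x : Fin q → g) :
    FiniteDimensional K (LieSubalgebra.lieSpan K g (Set.range x)) ∧
      Module.finrank K (LieSubalgebra.lieSpan K g (Set.range x)) ≤
        ∑ r ∈ Finset.range N, q ^ (r + 1) := by
  classical
  set f : Fin q × (Σ l : Fin N, Fin (l : ℕ) → Fin q) → g :=
    fun p => lnb x (x p.1) (List.ofFn p.2.2) with hf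
  have hV : Vmod K x = Submodule.span K (Set.range f) := by
    apply le_antisymm
    · rw [Vmod, Submodule.span_le]
      rintro _ ⟨i, L, rfl⟩
      by_cases hlen : L.length < N
      · apply Submodule.subset_span
        refine ⟨(i, ⟨⟨L.length, hlen⟩, L.get⟩), ?_⟩
        simp [hf, List.ofFn_get]
      · have h1 : lnb x (x i) L ∈ LieModule.lowerCentralSeries K g g N :=
          LieModule.antitone_lowerCentralSeries K g g (le_of_not_gt hlen) (lnb_mem_lcs x i L)
        rw [hnil, LieSubmodule.mem_bot] at h1
        rw [h1]; exact Submodule.zero_mem _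
    · rw [Submodule.span_le]
      rintro _ ⟨p, rfl⟩
      exact lnb_mem_V x p.1 _
  have heq := toSubmodule_lieSpan_eq (K := K) x
  have e : (LieSubalgebra.lieSpan K g (Set.range x) : Submodule K g) ≃ₗ[K] Vmod K x :=
    LinearEquiv.ofEq _ _ heq
  have hfd : FiniteDimensional K (Vmod K x) := by
    rw [hV]; exact FiniteDimensional.span_of_finite K (Set.finite_range f)
  have hcard : Module.finrank K (Vmod K x) ≤ ∑ r ∈ Finset.range N, q ^ (r + 1) := by
    have h1 : Module.finrank K (Vmod K x) ≤
        Fintype.card (Fin q × Σ l : Fin N, Fin (l : ℕ) → Fin q) := by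
      rw [hV]
      refine le_trans (finrank_span_le_card _) ?_
      rw [Set.toFinset_range]
      exact le_trans Finset.card_image_le (by simp)
    refine le_trans h1 (le_of_eq ?_)
    simp [Fintype.card_prod, Fintype.card_sigma, Fin.sum_univ_eq_sum_range,
      Finset.mul_sum, pow_succ']
  refine ⟨Module.Finite.equiv e.symm, ?_⟩
  calc Module.finrank K (LieSubalgebra.lieSpan K g (Set.range x))
      = Module.finrank K (Vmod K x) := e.finrank_eq
    _ ≤ _ := hcard
end

section
/- Let g be a Lie algebra over a field K with g^{(N+1)} = {0} for some integer N ≥ 1, and let S ⊆ g be any subset. Then the Lie subalgebra of g generated by S coincides, as a K-linear subspace, with the linear span of the set S ∪ { (ad v_r) ∘ ⋯ ∘ (ad v_1)(w) : v_1, …, v_r, w ∈ S, 1 ≤ r ≤ N−1 }. -/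
section Aux

variable (K : Type*) [Field K] (g : Type*) [LieRing g] [LieAlgebra K g]

/-- Iterated left-normed brackets lie in the corresponding term of the lower central
series. -/
lemma foldr_bracket_mem_lowerCentralSeries (l : List g) (w : g) :
    l.foldr (fun v acc => ⁅v, acc⁆) w ∈ LieModule.lowerCentralSeries K g g l.length := by
  induction l with
  | nil => simp
  | cons v l ih =>
    rw [List.length_cons, LieModule.lowerCentralSeries_succ]
    exact LieSubmodule.lie_mem_lie (LieSubmodule.mem_top v) ih

variable (S : Set g)

/-- The unbounded set of iterated brackets of elements of `S` (including `S` itself,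
as folds over the empty list). -/
def adIterSet (g : Type*) [LieRing g] (S : Set g) : Set g :=
  {z : g | ∃ l : List g, (∀ v ∈ l, v ∈ S) ∧ ∃ w ∈ S, z = l.foldr (fun v acc => ⁅v, acc⁆) w}

lemma subset_adIterSet : S ⊆ adIterSet g S := fun s hs => ⟨[], by simp, s, hs, rfl⟩

lemma lie_mem_span_adIterSet {v : g} (hv : v ∈ S) {x : g}
    (hx : x ∈ Submodule.span K (adIterSet g S)) :
    ⁅v, x⁆ ∈ Submodule.span K (adIterSet g S) := by
  induction hx using Submodule.span_induction with
  | mem y hy =>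
    obtain ⟨l, hl, w, hw, rfl⟩ := hy
    exact Submodule.subset_span ⟨v :: l, by simpa using ⟨hv, hl⟩, w, hw, rfl⟩
  | zero => simp
  | add y z hy hz ihy ihz => rw [lie_add]; exact Submodule.add_mem _ ihy ihz
  | smul a y hy ihy => rw [lie_smul]; exact Submodule.smul_mem _ _ ihy

lemma fold_lie_mem_span_adIterSet (l : List g) (hl : ∀ v ∈ l, v ∈ S) {w : g} (hw : w ∈ S)
    {x : g} (hx : x ∈ Submodule.span K (adIterSet g S)) :
    ⁅l.foldr (fun v acc => ⁅v, acc⁆) w, x⁆ ∈ Submodule.span K (adIterSet g S) := by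
  induction l generalizing x with
  | nil => exact lie_mem_span_adIterSet K g S hw hx
  | cons v l ih =>
    have hv : v ∈ S := hl v List.mem_cons_self
    have hl' : ∀ u ∈ l, u ∈ S := fun u hu => hl u (List.mem_cons_of_mem v hu)
    have h1 : ⁅v, ⁅l.foldr (fun v acc => ⁅v, acc⁆) w, x⁆⁆ ∈
        Submodule.span K (adIterSet g S) :=
      lie_mem_span_adIterSet K g S hv (ih hl' hx)
    have h2 : ⁅l.foldr (fun v acc => ⁅v, acc⁆) w, ⁅v, x⁆⁆ ∈
        Submodule.span K (adIterSet g S) :=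
      ih hl' (lie_mem_span_adIterSet K g S hv hx)
    have : ⁅(v :: l).foldr (fun v acc => ⁅v, acc⁆) w, x⁆ =
        ⁅v, ⁅l.foldr (fun v acc => ⁅v, acc⁆) w, x⁆⁆ -
          ⁅l.foldr (fun v acc => ⁅v, acc⁆) w, ⁅v, x⁆⁆ := by
      simp [lie_lie]
    rw [this]
    exact Submodule.sub_mem _ h1 h2

lemma span_adIterSet_lie_closed {x y : g}
    (hx : x ∈ Submodule.span K (adIterSet g S))
    (hy : y ∈ Submodule.span K (adIterSet g S)) :
    ⁅x, y⁆ ∈ Submodule.span K (adIterSet g S) := by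
  induction hx using Submodule.span_induction with
  | mem z hz =>
    obtain ⟨l, hl, w, hw, rfl⟩ := hz
    exact fold_lie_mem_span_adIterSet K g S l hl hw hy
  | zero => simp
  | add z z' hz hz' ihz ihz' => rw [add_lie]; exact Submodule.add_mem _ ihz ihz'
  | smul a z hz ihz => rw [smul_lie]; exact Submodule.smul_mem _ _ ihz

end Aux

/-- In an `(N+1)`-step nilpotent Lie algebra `g` over a field `K`, the Lie subalgebra
generated by a subset `S` coincides, as a `K`-linear subspace, with the linear span of `S`
together with all the elements `(ad v_r) ∘ ⋯ ∘ (ad v_1) w` with `v_1, …, v_r, w ∈ S` and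
`1 ≤ r ≤ N - 1`.  Such an iterated adjoint is encoded as `l.foldr (fun v acc => ⁅v, acc⁆) w`
for a nonempty list `l = [v_r, …, v_1]` of elements of `S` with `l.length ≤ N - 1`.
The hypothesis `g^{(N+1)} = 0` is expressed as `LieModule.lowerCentralSeries K g g N = ⊥`
(Mathlib's series starts at index `0` with `g^{(1)} = g`). -/
theorem lieSpan_toSubmodule_eq_span_union_adIterates_of_nilpotent
    (K : Type*) [Field K] (g : Type*) [LieRing g] [LieAlgebra K g]
    (N : ℕ) (hN : 1 ≤ N) (hnil : LieModule.lowerCentralSeries K g g N = ⊥)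
    (S : Set g) :
    LieSubalgebra.toSubmodule (LieSubalgebra.lieSpan K g S) =
      Submodule.span K (S ∪
        {z : g | ∃ l : List g, l ≠ [] ∧ l.length ≤ N - 1 ∧ (∀ v ∈ l, v ∈ S) ∧
          ∃ w ∈ S, z = l.foldr (fun v acc => ⁅v, acc⁆) w}) := by
  set Tb : Set g := S ∪
      {z : g | ∃ l : List g, l ≠ [] ∧ l.length ≤ N - 1 ∧ (∀ v ∈ l, v ∈ S) ∧
        ∃ w ∈ S, z = l.foldr (fun v acc => ⁅v, acc⁆) w} with hTb
  -- Step 1: span of the unbounded set equals span of the bounded set.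
  have hspan_eq : Submodule.span K (adIterSet g S) = Submodule.span K Tb := by
    apply le_antisymm
    · rw [Submodule.span_le]
      rintro z ⟨l, hl, w, hw, rfl⟩
      rcases eq_or_ne l [] with rfl | hlne
      · exact Submodule.subset_span (Or.inl hw)
      · by_cases hlen : l.length ≤ N - 1
        · exact Submodule.subset_span (Or.inr ⟨l, hlne, hlen, hl, w, hw, rfl⟩)
        · -- the iterated bracket vanishes
          have hNle : N ≤ l.length := by omega
          have hmem := foldr_bracket_mem_lowerCentralSeries K g l w
          have hle : LieModule.lowerCentralSeries K g g l.length ≤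
              LieModule.lowerCentralSeries K g g N :=
            LieModule.antitone_lowerCentralSeries K g g hNle
          have : l.foldr (fun v acc => ⁅v, acc⁆) w ∈
              (⊥ : LieSubmodule K g g) := hnil ▸ hle hmem
          rw [LieSubmodule.mem_bot] at this
          rw [this]
          exact Submodule.zero_mem _
    · rw [Submodule.span_le]
      rintro z (hz | ⟨l, _, _, hl, w, hw, rfl⟩)
      · exact Submodule.subset_span (subset_adIterSet g S hz)
      · exact Submodule.subset_span ⟨l, hl, w, hw, rfl⟩
  rw [← hspan_eq]
  -- Step 2: the span of the unbounded set is a Lie subalgebra containing S.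
  let P : LieSubalgebra K g :=
    { Submodule.span K (adIterSet g S) with
      lie_mem' := fun hx hy => span_adIterSet_lie_closed K g S hx hy }
  apply le_antisymm
  · have hle : LieSubalgebra.lieSpan K g S ≤ P :=
      LieSubalgebra.lieSpan_le.mpr (fun s hs =>
        Submodule.subset_span (subset_adIterSet g S hs))
    exact fun x hx => hle hx
  · rw [Submodule.span_le]
    rintro z ⟨l, hl, w, hw, rfl⟩
    induction l with
    | nil => exact LieSubalgebra.subset_lieSpan hw
    | cons v l ih =>
      exact (LieSubalgebra.lieSpan K g S).lie_mem
        (LieSubalgebra.subset_lieSpan (hl v List.mem_cons_self))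
        (ih (fun u hu => hl u (List.mem_cons_of_mem v hu)))
end

section
/- Let V be a real Banach space, let A be a bounded linear operator on V, and let q ≥ 1 be an integer. Then A^q = 0 if and only if for every t ∈ ℝ the operator exp(tA) satisfies (exp(tA) − I)^q = 0; that is, A is nilpotent of index at most q if and only if A generates a one-parameter group of unipotent operators of unipotence index at most q. -/
open NormedSpace Finset Nat

set_option synthInstance.maxHeartbeats 1000000
set_option maxHeartbeats 1000000

/-- A bounded operator `A` on a real Banach space `V` is nilpotent of index at most `q ≥ 1`
if and only if it generates a one-parameter group of unipotent operators of unipotence index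
at most `q`, i.e. `(exp(tA) - I)^q = 0` for every `t ∈ ℝ`. -/
theorem nilpotent_iff_exp_unipotent
    (V : Type) [NormedAddCommGroup V] [NormedSpace ℝ V] [CompleteSpace V]
    (A : V →L[ℝ] V) (q : ℕ) (hq : 1 ≤ q) :
    A ^ q = 0 ↔ ∀ t : ℝ, (NormedSpace.exp (t • A) - 1) ^ q = 0 := by
  constructor
  · intro hA t
    have hpow : ∀ n, q ≤ n → A ^ n = 0 := by
      intro n hn
      have : A ^ n = A ^ q * A ^ (n - q) := by
        rw [← pow_add, Nat.add_sub_cancel' hn]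
      rw [this, hA, zero_mul]
    have h1 : NormedSpace.exp (t • A) = ∑ n ∈ Finset.range q, ((n ! : ℝ)⁻¹ * t ^ n) • A ^ n := by
      simp only [NormedSpace.exp_eq_tsum ℝ]
      rw [tsum_eq_sum (s := Finset.range q)]
      · apply Finset.sum_congr rfl
        intro n _
        rw [smul_pow, smul_smul]
      · intro n hn
        rw [smul_pow, hpow n (by simpa using hn), smul_zero, smul_zero]
    set S : V →L[ℝ] V := ∑ n ∈ Finset.Ico 1 q, ((n ! : ℝ)⁻¹ * t ^ n) • A ^ (n - 1) with hS
    have hcomm : Commute A S := by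
      apply Commute.sum_right
      intro n _
      exact ((Commute.refl A).pow_right (n-1)).smul_right _
    have h2 : NormedSpace.exp (t • A) - 1 = A * S := by
      rw [h1, hS, Finset.mul_sum, Finset.range_eq_Ico,
        Finset.sum_eq_sum_Ico_succ_bot hq]
      have h0 : ((0 ! : ℝ)⁻¹ * t ^ 0) • A ^ 0 = 1 := by simp
      rw [h0, add_sub_cancel_left]
      apply Finset.sum_congr rfl
      intro n hn
      have hn1 : 1 ≤ n := (Finset.mem_Ico.mp hn).1
      rw [mul_smul_comm, ← _root_.pow_succ', Nat.sub_add_cancel hn1]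
    rw [h2, hcomm.mul_pow, hA, zero_mul]
  · intro h
    have hderiv : HasDerivAt (fun t : ℝ => NormedSpace.exp (t • A)) A 0 := by
      have := hasDerivAt_exp_smul_const (𝕂 := ℝ) A (0 : ℝ)
      simpa using this
    have hslope : Filter.Tendsto (fun t : ℝ => t⁻¹ • (NormedSpace.exp (t • A) - 1))
        (nhdsWithin 0 {0}ᶜ) (nhds A) := by
      have := hasDerivAt_iff_tendsto_slope.mp hderiv
      refine this.congr fun t => ?_
      simp [slope_def_module, NormedSpace.exp_zero]
    have htend : Filter.Tendsto (fun t : ℝ => (t⁻¹ • (NormedSpace.exp (t • A) - 1)) ^ q)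
        (nhdsWithin 0 {0}ᶜ) (nhds (A ^ q)) := hslope.pow q
    have heq : ∀ t ∈ ({0}ᶜ : Set ℝ), (t⁻¹ • (NormedSpace.exp (t • A) - 1)) ^ q = 0 := by
      intro t ht
      rw [smul_pow t⁻¹ (NormedSpace.exp (t • A) - 1) q, h t, smul_zero]
    have hz : Filter.Tendsto (fun _ : ℝ => (0 : V →L[ℝ] V)) (nhdsWithin 0 {0}ᶜ)
        (nhds (A ^ q)) := by
      refine htend.congr' ?_
      filter_upwards [self_mem_nhdsWithin] with t ht
      exact heq t ht
    exact tendsto_nhds_unique hz tendsto_const_nhds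
end
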